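/- For n ≥ 1 let C_n(t,p) = Σ_{D ∈ D_n} t^{seg(D)} p^{lseg(D)} ∈ ℚ[t,p], and let C = C(t,p;x) = p + Σ_{n≥1} C_n(t,p) x^n, a formal power series in x with coefficients in ℚ[t,p]. Let C₁ = C(t,1;x) denote the series obtained by substituting p = 1. Then t p² x² C₁² + p x (C − p x C − p) C₁ − (C − p x C − p) = 0. -/

import Mathlib

open scoped Classical

namespace KArr

/-- Positive reduction of a word over ℤ: each positive letter is replaced by its
rank among the distinct positive letters of the word; negative letters unchanged. -/
def posReduce (w : List ℤ) : List ℤ :=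
  w.map fun x => if 0 < x then ((w.toFinset.filter fun y => 0 < y ∧ y ≤ x).card : ℤ) else x

/-- The set of descents of a word (1-indexed: `i` is a descent iff `w_i > w_{i+1}`). -/
def desSet (w : List ℤ) : Finset ℕ :=
  (Finset.range w.length).filter fun i => 1 ≤ i ∧ w.getD i 0 < w.getD (i - 1) 0

/-- The number of descents of a word. -/
def desNum (w : List ℤ) : ℕ := (desSet w).card

/-- The subword of positive letters. -/
def posPart (w : List ℤ) : List ℤ := w.filter fun x => decide (0 < x)

/-- A `k`-arrangement of `[n]`: a permutation together with a color in `Fin k`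
attached to each fixed point (encoded as a total coloring that is `0` off the
fixed points). -/
abbrev Arrangement (n k : ℕ) :=
  {x : Equiv.Perm (Fin n) × (Fin n → Fin k) // ∀ j, x.1 j ≠ j → (x.2 j : ℕ) = 0}

/-- The derangement form of a `k`-arrangement: replace each fixed point by the
negative letter recording its color, then positively reduce.  (Color `c : Fin k`
encodes the letter `¬(c+1) = -(c+1)`.) -/
def dfWord {n k : ℕ} (a : Arrangement n k) : List ℤ :=
  posReduce <| (List.finRange n).map fun i =>
    if a.1.1 i = i then -(((a.1.2 i : ℕ) : ℤ) + 1) else ((a.1.1 i : ℕ) : ℤ) + 1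

/-- The permutation form of a `k`-arrangement: replace each fixed point whose
color is not `¬k` by the corresponding negative letter, then positively reduce. -/
def pfWord {n k : ℕ} (a : Arrangement n k) : List ℤ :=
  posReduce <| (List.finRange n).map fun i =>
    if a.1.1 i = i ∧ (a.1.2 i : ℕ) + 1 ≠ k then -(((a.1.2 i : ℕ) : ℤ) + 1)
    else ((a.1.1 i : ℕ) : ℤ) + 1

/-- `fix_i(a)`: the number of fixed points of the base permutation with color `c`. -/
noncomputable def fixCount {n k : ℕ} (a : Arrangement n k) (c : Fin k) : ℕ :=
  Nat.card {i : Fin n // a.1.1 i = i ∧ a.1.2 i = c}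

/-- `DEZ(a)`, the descent set of the derangement form. -/
def DEZset {n k : ℕ} (a : Arrangement n k) : Finset ℕ := desSet (dfWord a)

/-- `DES(a)`, the descent set of the permutation form. -/
def DESset {n k : ℕ} (a : Arrangement n k) : Finset ℕ := desSet (pfWord a)

/-- `dez(a)`, the number of descents of the derangement form. -/
def dez {n k : ℕ} (a : Arrangement n k) : ℕ := desNum (dfWord a)

/-- `des(a)`, the number of descents of the permutation form. -/
def des {n k : ℕ} (a : Arrangement n k) : ℕ := desNum (pfWord a)

/-- `Der(a)`, the derangement part: the positive subword of the derangement form. -/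
def Der {n k : ℕ} (a : Arrangement n k) : List ℤ := posPart (dfWord a)

/-- One-line notation of a permutation of `[n]`, as a word over `ℤ` with letters `1,…,n`. -/
def oneLine {n : ℕ} (π : Equiv.Perm (Fin n)) : List ℤ :=
  (List.finRange n).map fun i => ((π i : ℕ) : ℤ) + 1

/-- A word `w` contains the pattern `p` if some subsequence of `w` of the same
length as `p` is order-isomorphic to `p` (entrywise strict inequalities match). -/
def Contains (w p : List ℤ) : Prop :=
  ∃ s : List ℤ, s.Sublist w ∧ s.length = p.length ∧
    ∀ i j, i < p.length → j < p.length →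
      (s.getD i 0 < s.getD j 0 ↔ p.getD i 0 < p.getD j 0)

/-- A word avoids a pattern if it does not contain it. -/
def Avoids (w p : List ℤ) : Prop := ¬ Contains w p


/-- `dez`-word of a permutation: replace each fixed point by `¬1 = -1`,
then positively reduce (the `1`-arrangement derangement form). -/
def dzWordPerm {n : ℕ} (π : Equiv.Perm (Fin n)) : List ℤ :=
  posReduce <| (List.finRange n).map fun i =>
    if π i = i then (-1 : ℤ) else ((π i : ℕ) : ℤ) + 1

/-- The weak derangement part `Der_k(a)`: the derangement form with all letters `¬k` removed. -/
def wDer {n k : ℕ} (a : Arrangement n k) : List ℤ :=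
  (dfWord a).filter fun x => decide (x ≠ -(k : ℤ))

/-- For a word `w` which is a derangement form, position `j` (0-indexed) of `w` is an
excedance of the base permutation iff the letter is positive and exceeds the number
of positive letters among the first `j+1` letters. -/
def isExcAt (w : List ℤ) (j : ℕ) : Prop :=
  ((((w.take (j + 1)).filter fun x => decide (0 < x)).length : ℤ)) < w.getD j 0

/-- `e_i = E` for the (1-indexed) letter positions `0 ≤ i ≤ m+1` of `w`, with the
boundary conventions `e_0 = e_{m+1} = E`. -/
def slotE (w : List ℤ) (i : ℕ) : Prop :=
  i = 0 ∨ i = w.length + 1 ∨ isExcAt w (i - 1)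

/-- `w_i > w_{i+1}` (1-indexed letters) with the conventions `w_0 = w_{m+1} = +∞`;
this is the descent condition attached to slot `i`, `0 ≤ i ≤ m`. -/
def slotGt (w : List ℤ) (i : ℕ) : Prop :=
  i = 0 ∨ (i < w.length ∧ w.getD i 0 < w.getD (i - 1) 0)

/-- Slot `i` is of type I: `w_i > w_{i+1}` and `(e_i, e_{i+1}) = (E, N)`. -/
def typeI (w : List ℤ) (i : ℕ) : Prop := slotGt w i ∧ slotE w i ∧ ¬ slotE w (i + 1)

/-- Slot `i` is of type II: `w_i ≤ w_{i+1}` and `(e_i, e_{i+1}) = (N, E)`. -/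
def typeII (w : List ℤ) (i : ℕ) : Prop := ¬ slotGt w i ∧ ¬ slotE w i ∧ slotE w (i + 1)

/-- Slot `i` is of type III: `w_i ≤ w_{i+1}` and `(e_i, e_{i+1}) ≠ (N, E)`. -/
def typeIII (w : List ℤ) (i : ℕ) : Prop := ¬ slotGt w i ∧ ¬ (¬ slotE w i ∧ slotE w (i + 1))

/-- Slot `i` is of type IV: `w_i > w_{i+1}` and `(e_i, e_{i+1}) ≠ (E, N)`. -/
def typeIV (w : List ℤ) (i : ℕ) : Prop := slotGt w i ∧ ¬ (slotE w i ∧ ¬ slotE w (i + 1))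

/-- The length `s_i` of the `i`-th slot of the word `u` (a derangement form),
where the slot letters are the letters equal to `c` (`= ¬k`). -/
def slotLen (u : List ℤ) (c : ℤ) (i : ℕ) : ℕ :=
  let L := (List.range u.length).filter fun j => decide (u.getD j 0 ≠ c)
  (if i < L.length then L.getD i 0 else u.length) - (if i = 0 then 0 else L.getD (i - 1) 0 + 1)

/-- The number of peaks of a word: indices `i` (1-indexed, `2 ≤ i ≤ n-1`)
with `w_{i-1} < w_i > w_{i+1}`. -/
def peakNum (w : List ℤ) : ℕ :=
  ((List.range w.length).filter fun i => decide (0 < i ∧ i + 1 < w.length ∧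
    w.getD (i - 1) 0 < w.getD i 0 ∧ w.getD (i + 1) 0 < w.getD i 0)).length

/-- Number of fixed points of a permutation. -/
noncomputable def fixNum {n : ℕ} (π : Equiv.Perm (Fin n)) : ℕ :=
  Nat.card {i : Fin n // π i = i}

/-- Number of excedances of a permutation. -/
noncomputable def excNum {n : ℕ} (π : Equiv.Perm (Fin n)) : ℕ :=
  Nat.card {i : Fin n // i < π i}

/-- Number of anti-excedances of a permutation. -/
noncomputable def aexcNum {n : ℕ} (π : Equiv.Perm (Fin n)) : ℕ :=
  Nat.card {i : Fin n // π i < i}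

/-- `ldes` of a word: the smallest `i` which is a descent or equals the length
(0 for the empty word). -/
def ldesW (w : List ℤ) : ℕ :=
  (((List.range (w.length + 1)).filter fun i =>
    decide ((1 ≤ i ∧ i < w.length ∧ w.getD i 0 < w.getD (i - 1) 0) ∨ i = w.length))).headD 0

/-- `rdes` of a word: the length minus the position of the rightmost descent
(`sSup ∅ = 0` when there is no descent). -/
def rdesW (w : List ℤ) : ℕ :=
  w.length - ((List.range w.length).filter fun i =>
    decide (1 ≤ i ∧ w.getD i 0 < w.getD (i - 1) 0)).foldr max 0

/-- Number of crossing descents of a permutation: (1-indexed) descents `i` with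
`σ(i) ≥ i+1 ≥ σ(i+1)`. -/
def xdesW (w : List ℤ) : ℕ :=
  ((List.range w.length).filter fun i : ℕ =>
    decide (1 ≤ i ∧ (i : ℤ) + 1 ≤ w.getD (i - 1) 0 ∧ w.getD i 0 ≤ (i : ℤ) + 1)).length

/-- Number of crossing descents of a permutation. -/
def xdesNum {n : ℕ} (σ : Equiv.Perm (Fin n)) : ℕ := xdesW (oneLine σ)

/-- A height sequence `d` encodes a Dyck path: it is weakly increasing and `d_i ≤ i - 1`
(1-indexed), i.e. `d.getD i 0 ≤ i` (0-indexed). -/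
def IsDyck (d : List ℕ) : Prop :=
  List.Pairwise (· ≤ ·) d ∧ ∀ i < d.length, d.getD i 0 ≤ i

/-- Number of hills of a Dyck path: east steps of height equal to their index that
touch the diagonal and are immediately followed by a north step. -/
def hillNum (d : List ℕ) : ℕ :=
  ((List.range d.length).filter fun i => decide (d.getD i 0 = i ∧
    (i + 1 = d.length ∨ d.getD i 0 < d.getD (i + 1) 0))).length

/-- Number of segments of a Dyck path: maximal runs of at least two consecutive
equal heights (counted by their starting index). -/
def segNum (d : List ℕ) : ℕ :=
  ((List.range d.length).filter fun i => decide (i + 1 < d.length ∧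
    d.getD i 0 = d.getD (i + 1) 0 ∧ (i = 0 ∨ d.getD (i - 1) 0 ≠ d.getD i 0))).length

/-- `lseg`: the (1-indexed) position of the last step of the leftmost segment,
or `n+1` if there is no segment. -/
def lsegNum (d : List ℕ) : ℕ :=
  (((List.range (d.length + 2)).filter fun i =>
    decide ((2 ≤ i ∧ i ≤ d.length ∧ d.getD (i - 2) 0 = d.getD (i - 1) 0 ∧
      (i = d.length ∨ d.getD (i - 1) 0 ≠ d.getD i 0)) ∨ i = d.length + 1))).headD 0

/-- Dyck paths of semilength `n`, encoded as monotone functions `Fin n → Fin (n+1)`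
bounded by the diagonal (their height sequences). -/
def DyckFinset (n : ℕ) : Finset (Fin n → Fin (n + 1)) :=
  Finset.univ.filter fun f =>
    (∀ i j : Fin n, i ≤ j → f i ≤ f j) ∧ ∀ i : Fin n, (f i : ℕ) ≤ (i : ℕ)

/-- The height sequence of a function `Fin n → Fin (n+1)` as a list. -/
def hList {n : ℕ} (f : Fin n → Fin (n + 1)) : List ℕ :=
  (List.finRange n).map fun i => (f i : ℕ)


noncomputable def Cgf : PowerSeries (MvPolynomial (Fin 2) ℚ) :=
  PowerSeries.mk fun n =>
    if n = 0 then MvPolynomial.X 1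
    else ∑ f ∈ DyckFinset n,
      (MvPolynomial.X 0) ^ segNum (hList f) * (MvPolynomial.X 1) ^ lsegNum (hList f)

/-- The substitution `p = 1` (where `t = X 0`, `p = X 1`). -/
noncomputable def subP1 : MvPolynomial (Fin 2) ℚ →+* MvPolynomial (Fin 2) ℚ :=
  (MvPolynomial.aeval fun i : Fin 2 =>
    if i = 0 then (MvPolynomial.X 0 : MvPolynomial (Fin 2) ℚ) else 1).toRingHom


open List

open List Finset

/-- segNum as in the pinned file -/




-- getD helpers
lemma getD_lt {d : List ℕ} {i : ℕ} (h : i < d.length) : d.getD i 0 = d[i] :=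
  List.getD_eq_getElem d 0 h

lemma getD_ge {d : List ℕ} {i : ℕ} (h : d.length ≤ i) : d.getD i 0 = 0 :=
  List.getD_eq_default d 0 h

lemma getD_finRangeMap {n : ℕ} (f : Fin n → ℕ) {i : ℕ} (h : i < n) :
    ((List.finRange n).map f).getD i 0 = f ⟨i, h⟩ := by
  rw [List.getD_eq_getElem _ _ (by simpa using h)]
  simp

lemma adj_mono {d : List ℕ} (h : ∀ i, i + 1 < d.length → d.getD i 0 ≤ d.getD (i + 1) 0)
    {i j : ℕ} (hij : i ≤ j) (hj : j < d.length) : d.getD i 0 ≤ d.getD j 0 := by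
  induction j with
  | zero =>
      have : i = 0 := by omega
      subst this; rfl
  | succ k ih =>
      rcases Nat.lt_or_ge i (k+1) with hi | hi
      · exact le_trans (ih (by omega) (by omega)) (h k hj)
      · have : i = k + 1 := by omega
        subst this; rfl

/-- lists of length L with all entries ≤ B -/
def bL (B L : ℕ) : Finset (List ℕ) :=
  Finset.image (fun f : Fin L → Fin (B + 1) => (List.finRange L).map fun i => (f i : ℕ))
    Finset.univ

lemma mem_bL {B L : ℕ} {d : List ℕ} :
    d ∈ bL B L ↔ d.length = L ∧ ∀ i < L, d.getD i 0 ≤ B := by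
  constructor
  · rintro hd
    simp only [bL, Finset.mem_image] at hd
    obtain ⟨f, -, rfl⟩ := hd
    refine ⟨by simp, fun i hi => ?_⟩
    rw [getD_finRangeMap _ hi]
    exact Nat.lt_succ_iff.mp (f ⟨i, hi⟩).2
  · rintro ⟨hlen, hb⟩
    simp only [bL, Finset.mem_image]
    refine ⟨fun i => ⟨d.getD i 0, Nat.lt_succ_of_le (hb i i.2)⟩, Finset.mem_univ _, ?_⟩
    apply List.ext_getElem (by simp [hlen])
    intro i h1 h2
    simp only [List.getElem_map, List.getElem_finRange, Fin.coe_cast]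
    rw [getD_lt (by omega)]

noncomputable def DyckL (n : ℕ) : Finset (List ℕ) :=
  (bL n n).filter fun d => (∀ i < n, d.getD i 0 ≤ i) ∧
    (∀ i, i + 1 < n → d.getD i 0 ≤ d.getD (i + 1) 0)

lemma mem_DyckL {n : ℕ} {d : List ℕ} :
    d ∈ DyckL n ↔ d.length = n ∧ (∀ i < n, d.getD i 0 ≤ i) ∧
      (∀ i, i + 1 < n → d.getD i 0 ≤ d.getD (i + 1) 0) := by
  simp only [DyckL, Finset.mem_filter, mem_bL]
  constructor
  · rintro ⟨⟨h1, h2⟩, h3, h4⟩; exact ⟨h1, h3, h4⟩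
  · rintro ⟨h1, h3, h4⟩
    exact ⟨⟨h1, fun i hi => le_trans (h3 i hi) (by omega)⟩, h3, h4⟩

noncomputable def FL (m L : ℕ) : Finset (List ℕ) :=
  (bL (L + m) L).filter fun e => (∀ i < L, 1 ≤ e.getD i 0 ∧ e.getD i 0 ≤ i + m) ∧
    (∀ i, i + 1 < L → e.getD i 0 ≤ e.getD (i + 1) 0)

lemma mem_FL {m L : ℕ} {e : List ℕ} :
    e ∈ FL m L ↔ e.length = L ∧ (∀ i < L, 1 ≤ e.getD i 0 ∧ e.getD i 0 ≤ i + m) ∧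
      (∀ i, i + 1 < L → e.getD i 0 ≤ e.getD (i + 1) 0) := by
  simp only [FL, Finset.mem_filter, mem_bL]
  constructor
  · rintro ⟨⟨h1, h2⟩, h3, h4⟩; exact ⟨h1, h3, h4⟩
  · rintro ⟨h1, h3, h4⟩
    exact ⟨⟨h1, fun i hi => le_trans (h3 i hi).2 (by omega)⟩, h3, h4⟩


open List




lemma getD_map_add {d : List ℕ} {c i : ℕ} (h : i < d.length) :
    (d.map (· + c)).getD i 0 = d.getD i 0 + c := by
  rw [getD_lt (by simpa using h), getD_lt h]; simp

lemma getD_append_lt {a b : List ℕ} {i : ℕ} (h : i < a.length) :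
    (a ++ b).getD i 0 = a.getD i 0 := by
  rw [getD_lt (by simp; omega), getD_lt h, List.getElem_append_left h]

lemma getD_append_ge {a b : List ℕ} {i : ℕ} (h : a.length ≤ i) :
    (a ++ b).getD i 0 = b.getD (i - a.length) 0 := by
  rcases Nat.lt_or_ge i (a.length + b.length) with h2 | h2
  · rw [getD_lt (by simp; omega), getD_lt (by omega), List.getElem_append_right h]
  · rw [getD_ge (by simp; omega), getD_ge (by omega)]

lemma segNum_countP (d : List ℕ) : segNum d = (List.range d.length).countP
    (fun i => decide (i + 1 < d.length ∧
    d.getD i 0 = d.getD (i + 1) 0 ∧ (i = 0 ∨ d.getD (i - 1) 0 ≠ d.getD i 0))) := by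
  rw [segNum, List.countP_eq_length_filter]

lemma segNum_map_add (d : List ℕ) (c : ℕ) : segNum (d.map (· + c)) = segNum d := by
  rw [segNum_countP, segNum_countP, List.length_map]
  apply List.countP_congr
  intro i hi
  rw [List.mem_range] at hi
  simp only [decide_eq_true_eq, List.length_map]
  constructor
  · rintro ⟨h1, h2, h3⟩
    rw [getD_map_add hi, getD_map_add h1] at h2
    refine ⟨h1, by omega, ?_⟩
    rcases h3 with h3 | h3
    · exact Or.inl h3
    · right
      rw [getD_map_add (by omega), getD_map_add hi] at h3
      omega
  · rintro ⟨h1, h2, h3⟩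
    rw [getD_map_add hi, getD_map_add h1]
    refine ⟨h1, by omega, ?_⟩
    rcases h3 with h3 | h3
    · exact Or.inl h3
    · right
      rw [getD_map_add (show i - 1 < d.length by omega)]
      omega

lemma segNum_append {a b : List ℕ}
    (hj : 0 < a.length → 0 < b.length → a.getD (a.length - 1) 0 ≠ b.getD 0 0) :
    segNum (a ++ b) = segNum a + segNum b := by
  rcases Nat.eq_zero_or_pos a.length with ha | ha
  · rw [List.length_eq_zero_iff] at ha; subst ha; simp [segNum]
  rcases Nat.eq_zero_or_pos b.length with hb | hb
  · rw [List.length_eq_zero_iff] at hb; subst hb; simp [segNum]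
  have hne := hj ha hb
  rw [segNum_countP, segNum_countP, segNum_countP, List.length_append,
    List.range_add, List.countP_append, List.countP_map]
  congr 1
  · -- first part
    apply List.countP_congr
    intro i hi
    rw [List.mem_range] at hi
    simp only [decide_eq_true_eq, List.length_append]
    rcases Nat.lt_or_ge (i+1) a.length with h1 | h1
    · rw [getD_append_lt hi, getD_append_lt h1, getD_append_lt (by omega)]
      constructor
      · rintro ⟨-, h2, h3⟩; exact ⟨h1, h2, h3⟩
      · rintro ⟨-, h2, h3⟩; exact ⟨by omega, h2, h3⟩
    · -- i = a.length - 1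
      have hi1 : i = a.length - 1 := by omega
      constructor
      · rintro ⟨-, h2, -⟩
        exfalso
        rw [getD_append_lt hi, getD_append_ge (by omega)] at h2
        have : i + 1 - a.length = 0 := by omega
        rw [this] at h2
        exact hne (hi1 ▸ h2)
      · rintro ⟨h2, -, -⟩; omega
  · -- second part
    apply List.countP_congr
    intro i hi
    rw [List.mem_range] at hi
    simp only [Function.comp, decide_eq_true_eq, List.length_append]
    have e1 : (a ++ b).getD (a.length + i) 0 = b.getD i 0 := by
      rw [getD_append_ge (by omega)]; congr 1; omega
    have e2 : (a ++ b).getD (a.length + i + 1) 0 = b.getD (i + 1) 0 := by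
      rcases Nat.lt_or_ge (i+1) b.length with h | h
      · rw [getD_append_ge (by omega)]; congr 1; omega
      · rw [getD_ge (by simp; omega), getD_ge h]
    constructor
    · rintro ⟨h1, h2, h3⟩
      rw [e1, e2] at h2
      refine ⟨by omega, h2, ?_⟩
      rcases h3 with h3 | h3
      · left; omega
      · rcases Nat.eq_zero_or_pos i with hi0 | hi0
        · left; omega
        · right
          rw [e1] at h3
          have : (a ++ b).getD (a.length + i - 1) 0 = b.getD (i - 1) 0 := by
            rw [getD_append_ge (by omega)]; congr 1; omega
          rw [this] at h3
          exact h3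
    · rintro ⟨h1, h2, h3⟩
      rw [e1, e2]
      refine ⟨by omega, h2, Or.inr ?_⟩
      rcases Nat.eq_zero_or_pos i with hi0 | hi0
      · subst hi0
        have h4 : a.length + 0 - 1 = a.length - 1 := by omega
        rw [h4, getD_append_lt (by omega)]
        exact hne
      · have h4 : (a ++ b).getD (a.length + i - 1) 0 = b.getD (i - 1) 0 := by
          rw [getD_append_ge (by omega)]; congr 1; omega
        rw [h4]
        rcases h3 with h3 | h3
        · omega
        · exact h3

lemma getD_replicate {m i : ℕ} : (List.replicate m (0:ℕ)).getD i 0 = 0 := by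
  rcases Nat.lt_or_ge i m with h | h
  · rw [getD_lt (by simpa using h)]; simp
  · rw [getD_ge (by simpa using h)]

lemma segNum_replicate {m : ℕ} (hm : 2 ≤ m) : segNum (List.replicate m 0) = 1 := by
  rw [segNum_countP, List.length_replicate]
  have : ∀ i : ℕ, (decide (i + 1 < m ∧
      (List.replicate m 0).getD i 0 = (List.replicate m 0).getD (i + 1) 0 ∧
      (i = 0 ∨ (List.replicate m 0).getD (i - 1) 0 ≠ (List.replicate m 0).getD i 0)))
      = decide (i = 0) := by
    intro i
    simp only [getD_replicate, decide_eq_decide]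
    constructor
    · rintro ⟨h1, -, h3 | h3⟩
      · exact h3
      · simp at h3
    · rintro rfl
      refine ⟨by omega, by simp, Or.inl rfl⟩
  simp only [this]
  obtain ⟨m', rfl⟩ : ∃ m', m = m' + 1 := ⟨m - 1, by omega⟩
  rw [List.range_succ_eq_map, List.countP_cons_of_pos (by simp), List.countP_map]
  have h0 : List.countP ((fun i => decide (i = 0)) ∘ Nat.succ) (List.range m') = 0 := by
    rw [List.countP_eq_zero]
    intro a _
    simp
  omega


open List


def lsegQ (d : List ℕ) (i : ℕ) : Prop :=
  (2 ≤ i ∧ i ≤ d.length ∧ d.getD (i - 2) 0 = d.getD (i - 1) 0 ∧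
      (i = d.length ∨ d.getD (i - 1) 0 ≠ d.getD i 0)) ∨ i = d.length + 1

lemma headD_filter_range {q : ℕ → Bool} {N k : ℕ} (hkN : k < N) (hk : q k = true)
    (hmin : ∀ j < k, q j = false) : ((List.range N).filter q).headD 0 = k := by
  have hN : N = k + (N - k) := by omega
  rw [hN, List.range_add]
  rw [List.filter_append]
  have h1 : (List.range k).filter q = [] := by
    rw [List.filter_eq_nil_iff]
    intro a ha
    rw [List.mem_range] at ha
    simp [hmin a ha]
  obtain ⟨r, hr⟩ : ∃ r, N - k = r + 1 := ⟨N - k - 1, by omega⟩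
  rw [h1, hr, List.range_succ_eq_map, List.nil_append]
  simp only [List.map_cons, Nat.add_zero, List.map_map]
  rw [List.filter_cons_of_pos hk]
  rfl

lemma lsegNum_eq {d : List ℕ} {k : ℕ} (hk : lsegQ d k) (hmin : ∀ j < k, ¬ lsegQ d j) :
    lsegNum d = k := by
  have hkN : k < d.length + 2 := by
    rcases hk with ⟨-, h, -⟩ | h <;> omega
  apply headD_filter_range hkN
  · simpa [lsegQ] using hk
  · intro j hj
    simpa [lsegQ] using hmin j hj

lemma lsegQ_spec (d : List ℕ) : lsegQ d (lsegNum d) ∧ ∀ j < lsegNum d, ¬ lsegQ d j := by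
  have hex : ∃ i, lsegQ d i := ⟨d.length + 1, Or.inr rfl⟩
  have h1 : lsegNum d = Nat.find hex := lsegNum_eq (Nat.find_spec hex) (fun j hj => Nat.find_min hex hj)
  rw [h1]
  exact ⟨Nat.find_spec hex, fun j hj => Nat.find_min hex hj⟩

-- getD helpers again (dup from p2; will be merged)
lemma getD_lt' {d : List ℕ} {i : ℕ} (h : i < d.length) : d.getD i 0 = d[i] :=
  List.getD_eq_getElem d 0 h
lemma getD_ge' {d : List ℕ} {i : ℕ} (h : d.length ≤ i) : d.getD i 0 = 0 :=
  List.getD_eq_default d 0 h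
lemma getD_append_lt' {a b : List ℕ} {i : ℕ} (h : i < a.length) :
    (a ++ b).getD i 0 = a.getD i 0 := by
  rw [getD_lt' (by simp; omega), getD_lt' h, List.getElem_append_left h]
lemma getD_append_ge' {a b : List ℕ} {i : ℕ} (h : a.length ≤ i) :
    (a ++ b).getD i 0 = b.getD (i - a.length) 0 := by
  rcases Nat.lt_or_ge i (a.length + b.length) with h2 | h2
  · rw [getD_lt' (by simp; omega), getD_lt' (by omega), List.getElem_append_right h]
  · rw [getD_ge' (by simp; omega), getD_ge' (by omega)]
lemma getD_replicate' {m i : ℕ} : (List.replicate m (0:ℕ)).getD i 0 = 0 := by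
  rcases Nat.lt_or_ge i m with h | h
  · rw [getD_lt' (by simpa using h)]; simp
  · rw [getD_ge' (by simpa using h)]
lemma getD_map_add' {d : List ℕ} {c i : ℕ} (h : i < d.length) :
    (d.map (· + c)).getD i 0 = d.getD i 0 + c := by
  rw [getD_lt' (by simpa using h), getD_lt' h]; simp

/-- lseg of a path of the form 0^m ++ e with positive e entries is m. -/
lemma lseg_block {m : ℕ} (e : List ℕ) (hm : 2 ≤ m)
    (he : ∀ i < e.length, 1 ≤ e.getD i 0) :
    lsegNum (List.replicate m 0 ++ e) = m := by
  set d := List.replicate m 0 ++ e with hd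
  have hlen : d.length = m + e.length := by simp [hd]
  have hdlt : ∀ i < m, d.getD i 0 = 0 := by
    intro i hi
    rw [hd, getD_append_lt' (by simpa using hi), getD_replicate']
  apply lsegNum_eq
  · left
    refine ⟨hm, by omega, ?_, ?_⟩
    · rw [hdlt _ (by omega), hdlt _ (by omega)]
    · rcases Nat.eq_zero_or_pos e.length with h0 | h0
      · left; omega
      · right
        rw [hdlt _ (by omega), hd, getD_append_ge' (by simp)]
        simp only [List.length_replicate, Nat.sub_self]
        have := he 0 h0
        omega
  · intro j hj hQ
    rcases hQ with ⟨h2, h3, h4, h5⟩ | h6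
    · rcases h5 with h5 | h5
      · omega
      · rw [hdlt _ (by omega), hdlt _ (by omega)] at h5
        exact h5 rfl
    · omega

/-- lseg of 0 :: (d+1) is lseg d + 1. -/
lemma lseg_cons (d : List ℕ) : lsegNum (0 :: d.map (· + 1)) = lsegNum d + 1 := by
  obtain ⟨hQ, hmin⟩ := lsegQ_spec d
  generalize hk : lsegNum d = k at hQ hmin ⊢
  have hkb : k ≤ d.length + 1 := by rcases hQ with ⟨-, h, -⟩ | h <;> omega
  set D : List ℕ := 0 :: d.map (· + 1) with hD
  have hlenD : D.length = d.length + 1 := by simp [hD]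
  have hD0 : D.getD 0 0 = 0 := rfl
  have hDs : ∀ i < d.length, D.getD (i + 1) 0 = d.getD i 0 + 1 := by
    intro i hi
    rw [hD]
    show (d.map (· + 1)).getD i 0 = d.getD i 0 + 1
    exact getD_map_add' hi
  apply lsegNum_eq
  · rcases hQ with ⟨h2, h3, h4, h5⟩ | h6
    · left
      obtain ⟨s, rfl⟩ : ∃ s, k = s + 2 := ⟨k - 2, by omega⟩
      simp only [show s + 2 - 2 = s from by omega, show s + 2 - 1 = s + 1 from by omega]
        at h4 h5
      refine ⟨by omega, by omega, ?_, ?_⟩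
      · simp only [show s + 2 + 1 - 2 = s + 1 from by omega,
          show s + 2 + 1 - 1 = s + 2 from by omega]
        rw [hDs _ (by omega), hDs _ (by omega)]
        omega
      · rcases Nat.eq_or_lt_of_le h3 with hkl | hkl
        · left; omega
        rcases h5 with h5 | h5
        · left; omega
        · right
          simp only [show s + 2 + 1 - 1 = s + 2 from by omega,
            show s + 2 + 1 = (s + 2) + 1 from by omega]
          rw [show (s:ℕ) + 2 = (s + 1) + 1 from by omega, hDs _ (by omega)]
          rw [show (s:ℕ) + 2 + 1 = (s + 2) + 1 from by omega, hDs _ (by omega)]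
          omega
    · right
      omega
  · intro j hj hQj
    rcases hQj with ⟨h2, h3, h4, h5⟩ | h6
    · rcases Nat.lt_or_ge j 3 with h7 | h7
      · have hj2 : j = 2 := by omega
        subst hj2
        rcases Nat.eq_zero_or_pos d.length with h0 | h0
        · omega
        · have h4' : D.getD 0 0 = D.getD 1 0 := h4
          rw [hD0, show (1:ℕ) = 0 + 1 from rfl, hDs _ h0] at h4'
          omega
      · obtain ⟨r, rfl⟩ : ∃ r, j = r + 3 := ⟨j - 3, by omega⟩
        apply hmin (r + 2) (by omega)
        left
        have h4' : D.getD (r + 1) 0 = D.getD (r + 2) 0 := h4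
        rw [hDs _ (by omega), hDs _ (by omega)] at h4'
        refine ⟨by omega, by omega, ?_, ?_⟩
        · show d.getD r 0 = d.getD (r + 1) 0
          omega
        · rcases h5 with h5 | h5
          · left; omega
          · rcases Nat.eq_or_lt_of_le (show r + 2 ≤ d.length by omega) with he | he
            · left; omega
            · right
              have h5' : D.getD (r + 2) 0 ≠ D.getD (r + 3) 0 := h5
              rw [hDs _ (by omega), hDs _ (by omega)] at h5'
              show d.getD (r + 1) 0 ≠ d.getD (r + 2) 0
              omega
    · omega

-- ===== chunk A =====








local notation "Rg" => MvPolynomial (Fin 2) ℚ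
local notation "tP" => (MvPolynomial.X 0 : MvPolynomial (Fin 2) ℚ)
local notation "pP" => (MvPolynomial.X 1 : MvPolynomial (Fin 2) ℚ)

lemma getD_map {f : ℕ → ℕ} {l : List ℕ} {i : ℕ} (h : i < l.length) :
    (l.map f).getD i 0 = f (l.getD i 0) := by
  rw [getD_lt (by simpa using h), getD_lt h]; simp

lemma getD_take {l : List ℕ} {b i : ℕ} (h : i < b) :
    (l.take b).getD i 0 = l.getD i 0 := by
  rcases Nat.lt_or_ge i l.length with h2 | h2
  · rw [getD_lt (by simp; omega), getD_lt h2, List.getElem_take]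
  · rw [getD_ge (by simp; omega), getD_ge h2]

lemma getD_drop {l : List ℕ} {b i : ℕ} :
    (l.drop b).getD i 0 = l.getD (b + i) 0 := by
  rcases Nat.lt_or_ge (b + i) l.length with h2 | h2
  · rw [getD_lt (by simp; omega), getD_lt h2, List.getElem_drop]
  · rw [getD_ge (by simp; omega), getD_ge h2]

lemma hList_length {n : ℕ} (f : Fin n → Fin (n + 1)) : (hList f).length = n := by
  simp [hList]

lemma hList_getD {n : ℕ} (f : Fin n → Fin (n + 1)) {i : ℕ} (h : i < n) :
    (hList f).getD i 0 = (f ⟨i, h⟩ : ℕ) :=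
  getD_finRangeMap (fun i => (f i : ℕ)) h

lemma sum_Dyck_transfer (n : ℕ) :
    ∑ f ∈ DyckFinset n, tP ^ segNum (hList f) * pP ^ lsegNum (hList f)
      = ∑ d ∈ DyckL n, tP ^ segNum d * pP ^ lsegNum d := by
  apply Finset.sum_nbij' (i := fun f => hList f)
    (j := fun d => fun i : Fin n => (⟨min (d.getD (i : ℕ) 0) n, by omega⟩ : Fin (n + 1)))
  · intro f hf
    simp only [DyckFinset, Finset.mem_filter, Finset.mem_univ, true_and] at hf
    rw [mem_DyckL]
    refine ⟨hList_length f, fun i hi => ?_, fun i hi => ?_⟩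
    · rw [hList_getD f hi]; exact hf.2 ⟨i, hi⟩
    · rw [hList_getD f (by omega), hList_getD f hi]
      exact_mod_cast hf.1 ⟨i, by omega⟩ ⟨i + 1, hi⟩ (by simp)
  · intro d hd
    rw [mem_DyckL] at hd
    obtain ⟨hlen, hb, hadj⟩ := hd
    simp only [DyckFinset, Finset.mem_filter, Finset.mem_univ, true_and]
    constructor
    · intro i j hij
      simp only [Fin.mk_le_mk]
      have : d.getD (i : ℕ) 0 ≤ d.getD (j : ℕ) 0 :=
        adj_mono (by rw [hlen]; exact hadj) hij (by omega)
      omega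
    · intro i
      show min (d.getD (i : ℕ) 0) n ≤ (i : ℕ)
      have := hb i i.2
      omega
  · intro f hf
    simp only [DyckFinset, Finset.mem_filter, Finset.mem_univ, true_and] at hf
    funext i
    ext
    simp only [hList_getD f i.2]
    rw [Fin.eta]
    have h1 := hf.2 i
    have : (f i : ℕ) ≤ n := by omega
    omega
  · intro d hd
    rw [mem_DyckL] at hd
    obtain ⟨hlen, hb, hadj⟩ := hd
    apply List.ext_getElem (by rw [hList_length, hlen])
    intro i h1 h2
    have hn' : i < n := by rwa [hList_length] at h1
    rw [← getD_lt h1, hList_getD _ hn', ← getD_lt h2]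
    have : d.getD i 0 ≤ i := hb i (by omega)
    show min (d.getD i 0) n = d.getD i 0
    omega
  · intro f hf
    rfl

lemma coeff_Cgf {n : ℕ} (hn : n ≠ 0) :
    PowerSeries.coeff n Cgf = ∑ d ∈ DyckL n, tP ^ segNum d * pP ^ lsegNum d := by
  rw [Cgf, PowerSeries.coeff_mk, if_neg hn, sum_Dyck_transfer]

lemma coeff_Cgf_zero : PowerSeries.coeff 0 Cgf = pP := by
  rw [Cgf, PowerSeries.coeff_mk, if_pos rfl]

lemma segNum_cons (d : List ℕ) : segNum (0 :: d.map (· + 1)) = segNum d := by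
  have : (0 :: d.map (· + 1)) = [0] ++ d.map (· + 1) := rfl
  rw [this, segNum_append, segNum_map_add]
  · have : segNum [0] = 0 := by decide
    omega
  · intro h1 h2
    simp only [List.length_cons, List.length_nil]
    rw [getD_map (by simpa using h2)]
    simp

-- ===== chunk B =====
lemma sum_pos_part {n : ℕ} (hn : 2 ≤ n) :
    ∑ d ∈ (DyckL n).filter (fun d => 1 ≤ d.getD 1 0), tP ^ segNum d * pP ^ lsegNum d
      = pP * ∑ d ∈ DyckL (n - 1), tP ^ segNum d * pP ^ lsegNum d := by
  rw [Finset.mul_sum]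
  symm
  apply Finset.sum_nbij' (i := fun d => 0 :: d.map (· + 1))
    (j := fun d => (d.drop 1).map (· - 1))
  · intro d hd
    rw [mem_DyckL] at hd
    obtain ⟨hlen, hb, hadj⟩ := hd
    rw [Finset.mem_filter]
    have hlen' : ((0 : ℕ) :: d.map (· + 1)).length = n := by
      simp [hlen]; omega
    constructor
    · rw [mem_DyckL]
      refine ⟨hlen', fun i hi => ?_, fun i hi => ?_⟩
      · rcases Nat.eq_zero_or_pos i with rfl | hip
        · simp
        · obtain ⟨i', rfl⟩ : ∃ i', i = i' + 1 := ⟨i - 1, by omega⟩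
          rw [List.getD_cons_succ, getD_map (by omega)]
          have := hb i' (by omega)
          omega
      · rcases Nat.eq_zero_or_pos i with rfl | hip
        · simp
        · obtain ⟨i', rfl⟩ : ∃ i', i = i' + 1 := ⟨i - 1, by omega⟩
          rw [List.getD_cons_succ, List.getD_cons_succ, getD_map (by omega),
            getD_map (by omega)]
          have := hadj i' (by omega)
          omega
    · rw [List.getD_cons_succ, getD_map (by omega)]
      omega
  · intro d hd
    rw [Finset.mem_filter, mem_DyckL] at hd
    obtain ⟨⟨hlen, hb, hadj⟩, hd1⟩ := hd
    rw [mem_DyckL]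
    have hlen2 : ((d.drop 1).map (· - 1)).length = n - 1 := by simp [hlen]
    refine ⟨hlen2, fun i hi => ?_, fun i hi => ?_⟩
    · rw [getD_map (by simp; omega), getD_drop]
      have := hb (1 + i) (by omega)
      omega
    · rw [getD_map (by simp; omega), getD_map (by simp; omega), getD_drop, getD_drop]
      have h1 := hadj (1 + i) (by omega)
      have h2 : d.getD (1 + i) 0 ≥ 1 := by
        rcases Nat.eq_zero_or_pos i with rfl | hip
        · simpa using hd1
        · calc 1 ≤ d.getD 1 0 := hd1
            _ ≤ d.getD (1 + i) 0 := adj_mono (by rw [hlen]; exact hadj) (by omega) (by omega)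
      have e1 : 1 + (i + 1) = (1 + i) + 1 := by omega
      rw [e1]
      omega
  · intro d hd
    show ((d.map (· + 1)).map (· - 1)) = d
    rw [List.map_map]
    have : ∀ x ∈ d, ((· - 1) ∘ (· + 1)) x = id x := by intro x _; simp
    rw [List.map_congr_left this, List.map_id]
  · intro d hd
    rw [Finset.mem_filter, mem_DyckL] at hd
    obtain ⟨⟨hlen, hb, hadj⟩, hd1⟩ := hd
    show 0 :: ((d.drop 1).map (· - 1)).map (· + 1) = d
    rw [List.map_map]
    have hmem : ∀ x ∈ d.drop 1, ((· + 1) ∘ (· - 1)) x = id x := by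
      intro x hx
      obtain ⟨i, hilen, hget⟩ := List.mem_iff_getElem.mp hx
      have : x = d.getD (1 + i) 0 := by rw [← hget, ← getD_drop, getD_lt hilen]
      have hx1 : 1 ≤ x := by
        rw [this]
        calc 1 ≤ d.getD 1 0 := hd1
          _ ≤ d.getD (1 + i) 0 := by
            apply adj_mono (by rw [hlen]; exact hadj) (by omega)
            rw [hlen]
            simp at hilen
            omega
      simp only [Function.comp, id]
      omega
    rw [List.map_congr_left hmem, List.map_id]
    apply List.ext_getElem (by simp [hlen]; omega)
    intro i h1 h2
    rcases Nat.eq_zero_or_pos i with rfl | hip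
    · simp only [List.getElem_cons_zero]
      have := hb 0 (by omega)
      rw [getD_lt h2] at this
      omega
    · obtain ⟨i', rfl⟩ : ∃ i', i = i' + 1 := ⟨i - 1, by omega⟩
      simp only [List.getElem_cons_succ]
      rw [List.getElem_drop]
      congr 1
      omega
  · intro d hd
    rw [segNum_cons, lseg_cons]
    ring

-- ===== chunk C =====
lemma ext_getD {a b : List ℕ} (hl : a.length = b.length)
    (h : ∀ i < a.length, a.getD i 0 = b.getD i 0) : a = b := by
  apply List.ext_getElem hl
  intro i h1 h2
  rw [← getD_lt h1, ← getD_lt h2]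
  exact h i h1

noncomputable def gm (m L : ℕ) : MvPolynomial (Fin 2) ℚ := ∑ e ∈ FL m L, tP ^ segNum e

noncomputable def Zm (n m : ℕ) : Finset (List ℕ) :=
  (DyckL n).filter fun d => (∀ i < m, d.getD i 0 = 0) ∧ (m = n ∨ 1 ≤ d.getD m 0)

lemma sum_Zm {n m : ℕ} (hm : 2 ≤ m) (hmn : m ≤ n) :
    ∑ d ∈ Zm n m, tP ^ segNum d * pP ^ lsegNum d = tP * pP ^ m * gm m (n - m) := by
  rw [gm, Finset.mul_sum]
  symm
  apply Finset.sum_nbij' (i := fun e => List.replicate m 0 ++ e) (j := fun d => d.drop m)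
  · intro e he
    rw [mem_FL] at he
    obtain ⟨hlen, hb, hadj⟩ := he
    have hlow : ∀ i < m, (List.replicate m 0 ++ e).getD i 0 = 0 := by
      intro i hi
      rw [getD_append_lt (by simpa using hi), getD_replicate]
    have hhigh : ∀ i, m ≤ i → (List.replicate m 0 ++ e).getD i 0 = e.getD (i - m) 0 := by
      intro i hi
      rw [getD_append_ge (by simpa using hi)]
      simp
    simp only [Zm, Finset.mem_filter]
    refine ⟨?_, fun i hi => hlow i hi, ?_⟩
    · rw [mem_DyckL]
      refine ⟨by simp [hlen]; omega, fun i hi => ?_, fun i hi => ?_⟩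
      · rcases Nat.lt_or_ge i m with h | h
        · rw [hlow i h]; omega
        · rw [hhigh i h]
          have := hb (i - m) (by omega)
          omega
      · rcases Nat.lt_or_ge i m with h | h
        · rw [hlow i h]; omega
        · rw [hhigh i h, hhigh (i + 1) (by omega)]
          rcases Nat.eq_or_lt_of_le h with rfl | h2
          · simp only [Nat.sub_self]
            have e1 : m + 1 - m = 1 := by omega
            rw [e1]
            have h5 := hadj 0 (by omega)
            simpa using h5
          · have := hadj (i - m) (by omega)
            have e1 : i + 1 - m = (i - m) + 1 := by omega
            rw [e1]
            exact this
    · rcases Nat.eq_or_lt_of_le hmn with rfl | h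
      · left; rfl
      · right
        rw [hhigh m (le_refl m), Nat.sub_self]
        exact (hb 0 (by omega)).1
  · intro d hd
    simp only [Zm, Finset.mem_filter] at hd
    obtain ⟨hdd, hz, hpos⟩ := hd
    rw [mem_DyckL] at hdd
    obtain ⟨hlen, hb, hadj⟩ := hdd
    rw [mem_FL]
    refine ⟨by simp [hlen], fun i hi => ?_, fun i hi => ?_⟩
    · rw [getD_drop]
      constructor
      · rcases hpos with rfl | hpos
        · omega
        · calc 1 ≤ d.getD m 0 := hpos
            _ ≤ d.getD (m + i) 0 := adj_mono (by rw [hlen]; exact hadj) (by omega) (by omega)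
      · have := hb (m + i) (by omega)
        omega
    · rw [getD_drop, getD_drop]
      have := hadj (m + i) (by omega)
      have e1 : m + (i + 1) = (m + i) + 1 := by omega
      rw [e1]
      exact this
  · intro e he
    simpa using List.drop_left (List.replicate m 0) e
  · intro d hd
    simp only [Zm, Finset.mem_filter] at hd
    obtain ⟨hdd, hz, hpos⟩ := hd
    rw [mem_DyckL] at hdd
    obtain ⟨hlen, hb, hadj⟩ := hdd
    apply ext_getD (by simp [hlen]; omega)
    intro i hi
    simp only [List.length_append, List.length_replicate, List.length_drop] at hi
    rcases Nat.lt_or_ge i m with h | h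
    · rw [getD_append_lt (by simpa using h), getD_replicate, hz i h]
    · rw [getD_append_ge (by simpa using h)]
      simp only [List.length_replicate]
      rw [getD_drop]
      congr 1
      omega
  · intro e he
    rw [mem_FL] at he
    obtain ⟨hlen, hb, hadj⟩ := he
    have hseg : segNum (List.replicate m 0 ++ e) = 1 + segNum e := by
      have hj : 0 < (List.replicate m (0:ℕ)).length → 0 < e.length →
          (List.replicate m (0:ℕ)).getD ((List.replicate m (0:ℕ)).length - 1) 0 ≠
            e.getD 0 0 := by
        intro h1 h2
        rw [getD_replicate]
        have := hb 0 (by omega)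
        omega
      rw [segNum_append hj, segNum_replicate hm]
    have hlseg : lsegNum (List.replicate m 0 ++ e) = m :=
      lseg_block e hm (fun i hi => (hb i (by rwa [hlen] at hi)).1)
    rw [hseg, hlseg, pow_add, pow_one]
    ring

lemma Zm_disjoint {n : ℕ} : (↑(Finset.Icc 2 n) : Set ℕ).PairwiseDisjoint (Zm n) := by
  intro a ha b hb hab
  simp only [Finset.coe_Icc, Set.mem_Icc] at ha hb
  rw [Function.onFun, Finset.disjoint_left]
  intro d hda hdb
  simp only [Zm, Finset.mem_filter] at hda hdb
  rcases Nat.lt_or_ge a b with h | h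
  · rcases hda.2.2 with h' | h'
    · omega
    · have := hdb.2.1 a h; omega
  · have hab' : b < a := by omega
    rcases hdb.2.2 with h' | h'
    · omega
    · have := hda.2.1 b hab'; omega

lemma zero_part_eq_biUnion {n : ℕ} (hn : 2 ≤ n) :
    (DyckL n).filter (fun d => d.getD 1 0 = 0) = (Finset.Icc 2 n).biUnion (fun m => Zm n m) := by
  ext d
  simp only [Finset.mem_filter, Finset.mem_biUnion, Finset.mem_Icc, Zm]
  constructor
  · rintro ⟨hd, h1⟩
    have hd' := hd
    rw [mem_DyckL] at hd'
    obtain ⟨hlen, hb, hadj⟩ := hd'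
    have hd0 : d.getD 0 0 = 0 := by have := hb 0 (by omega); omega
    have hex : ∃ i, i = n ∨ 1 ≤ d.getD i 0 := ⟨n, Or.inl rfl⟩
    obtain ⟨m, hP, hmin⟩ : ∃ m, (m = n ∨ 1 ≤ d.getD m 0) ∧
        ∀ j < m, ¬(j = n ∨ 1 ≤ d.getD j 0) :=
      ⟨Nat.find hex, Nat.find_spec hex, fun j hj => Nat.find_min hex hj⟩
    have hmn : m ≤ n := by
      by_contra hc
      have := hmin n (by omega)
      exact this (Or.inl rfl)
    have hm2 : 2 ≤ m := by
      by_contra hc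
      rcases Nat.lt_or_ge m 1 with h0 | h0
      · have hm0 : m = 0 := by omega
        subst hm0
        rcases hP with h' | h' <;> omega
      · have hm1 : m = 1 := by omega
        subst hm1
        rcases hP with h' | h' <;> omega
    refine ⟨m, ⟨hm2, hmn⟩, hd, fun i hi => ?_, hP⟩
    have := hmin i hi
    push_neg at this
    omega
  · rintro ⟨m, ⟨hm2, hmn⟩, hdd, hz, _⟩
    exact ⟨hdd, hz 1 (by omega)⟩

lemma sum_zero_part {n : ℕ} (hn : 2 ≤ n) :
    ∑ d ∈ (DyckL n).filter (fun d => d.getD 1 0 = 0), tP ^ segNum d * pP ^ lsegNum d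
      = ∑ m ∈ Finset.Icc 2 n, tP * pP ^ m * gm m (n - m) := by
  rw [zero_part_eq_biUnion hn, Finset.sum_biUnion Zm_disjoint]
  refine Finset.sum_congr rfl fun m hm => ?_
  rw [Finset.mem_Icc] at hm
  exact sum_Zm hm.1 hm.2

lemma coeff_split {n : ℕ} (hn : 2 ≤ n) :
    PowerSeries.coeff n Cgf = pP * PowerSeries.coeff (n - 1) Cgf +
      ∑ m ∈ Finset.Icc 2 n, tP * pP ^ m * gm m (n - m) := by
  rw [coeff_Cgf (by omega), coeff_Cgf (show n - 1 ≠ 0 by omega)]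
  rw [← Finset.sum_filter_add_sum_filter_not (DyckL n) (fun d => 1 ≤ d.getD 1 0)]
  have hfe : (DyckL n).filter (fun d => ¬ 1 ≤ d.getD 1 0) =
      (DyckL n).filter (fun d => d.getD 1 0 = 0) := by
    apply Finset.filter_congr
    intro d _
    constructor
    · intro h; omega
    · intro h; omega
  rw [hfe, sum_pos_part hn, sum_zero_part hn]

-- ===== chunk D =====
noncomputable def aL (j : ℕ) : MvPolynomial (Fin 2) ℚ := ∑ d ∈ DyckL j, tP ^ segNum d

lemma FL_pos {m L : ℕ} {e : List ℕ} (he : e ∈ FL m L) : ∀ x ∈ e, 1 ≤ x := by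
  rw [mem_FL] at he
  obtain ⟨hlen, hb, -⟩ := he
  intro x hx
  obtain ⟨i, hi, hget⟩ := List.mem_iff_getElem.mp hx
  have := (hb i (by omega)).1
  rw [getD_lt hi] at this
  omega

lemma blk_ex (e : List ℕ) : ∃ i, i = e.length ∨ (i < e.length ∧ i + 2 ≤ e.getD i 0) :=
  ⟨e.length, Or.inl rfl⟩

noncomputable def blk (e : List ℕ) : ℕ := Nat.find (blk_ex e)

lemma blk_spec (e : List ℕ) :
    (blk e = e.length ∨ (blk e < e.length ∧ blk e + 2 ≤ e.getD (blk e) 0)) ∧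
    (blk e ≤ e.length) ∧
    (∀ i < blk e, e.getD i 0 ≤ i + 1) := by
  have h1 : blk e = e.length ∨ (blk e < e.length ∧ blk e + 2 ≤ e.getD (blk e) 0) :=
    Nat.find_spec (blk_ex e)
  have h2 : ∀ j, j < blk e → ¬(j = e.length ∨ (j < e.length ∧ j + 2 ≤ e.getD j 0)) :=
    fun j hj => Nat.find_min (blk_ex e) hj
  have h3 : blk e ≤ e.length := Nat.find_le (Or.inl rfl)
  refine ⟨h1, h3, fun i hi => ?_⟩
  have := h2 i hi
  push_neg at this
  have := this.2 (by omega)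
  omega

lemma blk_eq {e : List ℕ} {b : ℕ}
    (hP : b = e.length ∨ (b < e.length ∧ b + 2 ≤ e.getD b 0))
    (hmin : ∀ i < b, i < e.length ∧ e.getD i 0 ≤ i + 1) : blk e = b := by
  rw [blk, Nat.find_eq_iff]
  refine ⟨hP, fun i hi => ?_⟩
  push_neg
  have := hmin i hi
  exact ⟨by omega, fun _ => by omega⟩

noncomputable def Pr (m L : ℕ) : Finset (List ℕ × List ℕ) :=
  (Finset.HasAntidiagonal.antidiagonal L).biUnion (fun jk => DyckL jk.1 ×ˢ FL m jk.2)

lemma Pr_disjoint {m L : ℕ} :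
    (↑(Finset.HasAntidiagonal.antidiagonal L) : Set (ℕ × ℕ)).PairwiseDisjoint
      (fun jk => DyckL jk.1 ×ˢ FL m jk.2) := by
  intro a ha b hb hab
  rw [Function.onFun, Finset.disjoint_left]
  intro hf h1 h2
  rw [Finset.mem_product] at h1 h2
  apply hab
  rw [Finset.mem_coe, Finset.HasAntidiagonal.mem_antidiagonal] at ha hb
  have e1 : hf.1.length = a.1 := (mem_DyckL.mp h1.1).1
  have e2 : hf.1.length = b.1 := (mem_DyckL.mp h2.1).1
  have : a.1 = b.1 := by omega
  ext
  · exact this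
  · omega

lemma mem_Pr {m L : ℕ} {hf : List ℕ × List ℕ} :
    hf ∈ Pr m L ↔ hf.1 ∈ DyckL hf.1.length ∧ hf.2 ∈ FL m hf.2.length ∧
      hf.1.length + hf.2.length = L := by
  rw [Pr, Finset.mem_biUnion]
  constructor
  · rintro ⟨jk, hjk, hmem⟩
    rw [Finset.HasAntidiagonal.mem_antidiagonal] at hjk
    rw [Finset.mem_product] at hmem
    have e1 : hf.1.length = jk.1 := (mem_DyckL.mp hmem.1).1
    have e2 : hf.2.length = jk.2 := (mem_FL.mp hmem.2).1
    refine ⟨by rw [e1]; exact hmem.1, by rw [e2]; exact hmem.2, by omega⟩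
  · rintro ⟨h1, h2, h3⟩
    exact ⟨(hf.1.length, hf.2.length), by rwa [Finset.HasAntidiagonal.mem_antidiagonal],
      by rw [Finset.mem_product]; exact ⟨h1, h2⟩⟩

lemma glue_getD_lo {h f : List ℕ} {i : ℕ} (hi : i < h.length) :
    (h.map (· + 1) ++ f.map (· + (h.length + 1))).getD i 0 = h.getD i 0 + 1 := by
  rw [getD_append_lt (by simpa using hi), getD_map hi]

lemma glue_getD_hi {h f : List ℕ} {i : ℕ} (hi : h.length ≤ i) (hi2 : i < h.length + f.length) :
    (h.map (· + 1) ++ f.map (· + (h.length + 1))).getD i 0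
      = f.getD (i - h.length) 0 + (h.length + 1) := by
  rw [getD_append_ge (by simpa using hi)]
  simp only [List.length_map]
  rw [getD_map (by omega)]

lemma blk_glue {m : ℕ} {h f : List ℕ} (hh : h ∈ DyckL h.length) (hf : f ∈ FL m f.length) :
    blk (h.map (· + 1) ++ f.map (· + (h.length + 1))) = h.length := by
  obtain ⟨hlen1, hb1, hadj1⟩ := mem_DyckL.mp hh
  obtain ⟨hlen2, hb2, hadj2⟩ := mem_FL.mp hf
  set g := h.map (· + 1) ++ f.map (· + (h.length + 1)) with hg
  have hglen : g.length = h.length + f.length := by simp [hg]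
  apply blk_eq
  · rcases Nat.eq_zero_or_pos f.length with h0 | h0
    · left; omega
    · right
      refine ⟨by omega, ?_⟩
      rw [hg, glue_getD_hi (le_refl _) (by omega), Nat.sub_self]
      have := (hb2 0 h0).1
      omega
  · intro i hi
    refine ⟨by omega, ?_⟩
    rw [hg, glue_getD_lo hi]
    have := hb1 i hi
    omega

lemma glue_mem_FL {m L : ℕ} {hf : List ℕ × List ℕ} (hmem : hf ∈ Pr m L) :
    hf.1.map (· + 1) ++ hf.2.map (· + (hf.1.length + 1)) ∈ FL (m + 1) L := by
  obtain ⟨hh, hff, hsum⟩ := mem_Pr.mp hmem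
  obtain ⟨-, hb1, hadj1⟩ := mem_DyckL.mp hh
  obtain ⟨-, hb2, hadj2⟩ := mem_FL.mp hff
  set h := hf.1
  set f := hf.2
  rw [mem_FL]
  have hglen : (h.map (· + 1) ++ f.map (· + (h.length + 1))).length = L := by
    simp [hsum]
  refine ⟨hglen, fun i hi => ?_, fun i hi => ?_⟩
  · rcases Nat.lt_or_ge i h.length with hil | hil
    · rw [glue_getD_lo hil]
      have := hb1 i hil
      omega
    · rw [glue_getD_hi hil (by omega)]
      have := hb2 (i - h.length) (by omega)
      omega
  · rcases Nat.lt_or_ge (i + 1) h.length with hil | hil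
    · rw [glue_getD_lo hil, glue_getD_lo (by omega)]
      have := hadj1 i hil
      omega
    · rcases Nat.lt_or_ge i h.length with hil2 | hil2
      · -- i + 1 = h.length, junction
        have hieq : i + 1 = h.length := by omega
        rw [glue_getD_lo hil2, glue_getD_hi (by omega) (by omega)]
        have h1 := hb1 i hil2
        omega
      · rw [glue_getD_hi hil2 (by omega), glue_getD_hi hil (by omega)]
        have := hadj2 (i - h.length) (by omega)
        have e1 : i + 1 - h.length = (i - h.length) + 1 := by omega
        rw [e1]
        omega

lemma split_mem_Pr {m L : ℕ} {e : List ℕ} (he : e ∈ FL (m + 1) L) :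
    ((e.take (blk e)).map (· - 1), (e.drop (blk e)).map (· - (blk e + 1))) ∈ Pr m L := by
  obtain ⟨hlen, hb, hadj⟩ := mem_FL.mp he
  obtain ⟨hP, hble, hmin⟩ := blk_spec e
  set b := blk e with hbdef
  have hblow : b < e.length → b + 2 ≤ e.getD b 0 := by
    intro h
    rcases hP with h' | h'
    · omega
    · exact h'.2
  rw [mem_Pr]
  have l1 : ((e.take b).map (· - 1)).length = b := by simp; omega
  have l2 : ((e.drop b).map (· - (b + 1))).length = e.length - b := by simp
  refine ⟨?_, ?_, by simp only [l1, l2]; omega⟩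
  · rw [mem_DyckL, l1]
    refine ⟨rfl, fun i hi => ?_, fun i hi => ?_⟩
    · rw [getD_map (by simp; omega), getD_take hi]
      have := hmin i hi
      omega
    · rw [getD_map (by simp; omega), getD_map (by simp; omega), getD_take (by omega),
        getD_take (by omega)]
      have := hadj i (by omega)
      omega
  · rw [mem_FL, l2]
    refine ⟨rfl, fun i hi => ?_, fun i hi => ?_⟩
    · rw [getD_map (by simp; omega), getD_drop]
      have hbe : b < e.length := by omega
      have h1 := hblow hbe
      have h2 : e.getD b 0 ≤ e.getD (b + i) 0 :=
        adj_mono (by rw [hlen]; exact hadj) (by omega) (by omega)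
      have h3 := (hb (b + i) (by omega)).2
      omega
    · rw [getD_map (by simp; omega), getD_map (by simp; omega), getD_drop, getD_drop]
      have := hadj (b + i) (by omega)
      have e1 : b + (i + 1) = (b + i) + 1 := by omega
      rw [e1]
      omega

lemma split_glue {m L : ℕ} {hf : List ℕ × List ℕ} (hmem : hf ∈ Pr m L) :
    (((hf.1.map (· + 1) ++ hf.2.map (· + (hf.1.length + 1))).take
        (blk (hf.1.map (· + 1) ++ hf.2.map (· + (hf.1.length + 1))))).map (· - 1),
     ((hf.1.map (· + 1) ++ hf.2.map (· + (hf.1.length + 1))).drop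
        (blk (hf.1.map (· + 1) ++ hf.2.map (· + (hf.1.length + 1))))).map
          (· - (blk (hf.1.map (· + 1) ++ hf.2.map (· + (hf.1.length + 1))) + 1))) = hf := by
  obtain ⟨hh, hff, hsum⟩ := mem_Pr.mp hmem
  have hblk := blk_glue hh hff
  rw [hblk]
  have htake : (hf.1.map (· + 1) ++ hf.2.map (· + (hf.1.length + 1))).take hf.1.length
      = hf.1.map (· + 1) := by
    rw [show hf.1.length = (hf.1.map (· + 1)).length by simp, List.take_left]
  have hdrop : (hf.1.map (· + 1) ++ hf.2.map (· + (hf.1.length + 1))).drop hf.1.length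
      = hf.2.map (· + (hf.1.length + 1)) := by
    rw [show hf.1.length = (hf.1.map (· + 1)).length by simp, List.drop_left]
  rw [htake, hdrop, List.map_map, List.map_map]
  ext : 1
  · show hf.1.map ((· - 1) ∘ (· + 1)) = hf.1
    rw [List.map_congr_left (fun x _ => by simp : ∀ x ∈ hf.1, ((· - 1) ∘ (· + 1)) x = id x),
      List.map_id]
  · show hf.2.map ((· - (hf.1.length + 1)) ∘ (· + (hf.1.length + 1))) = hf.2
    rw [List.map_congr_left
      (fun x _ => by simp : ∀ x ∈ hf.2,
        ((· - (hf.1.length + 1)) ∘ (· + (hf.1.length + 1))) x = id x), List.map_id]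

lemma glue_split {m L : ℕ} {e : List ℕ} (he : e ∈ FL (m + 1) L) :
    ((e.take (blk e)).map (· - 1)).map (· + 1) ++
      ((e.drop (blk e)).map (· - (blk e + 1))).map
        (· + (((e.take (blk e)).map (· - 1)).length + 1)) = e := by
  obtain ⟨hlen, hb, hadj⟩ := mem_FL.mp he
  obtain ⟨hP, hble, hmin⟩ := blk_spec e
  set b := blk e with hbdef
  have l1 : ((e.take b).map (· - 1)).length = b := by simp; omega
  rw [l1, List.map_map, List.map_map]
  have h1 : (e.take b).map ((· + 1) ∘ (· - 1)) = e.take b := by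
    rw [List.map_congr_left, List.map_id]
    intro x hx
    have hxe : x ∈ e := List.mem_of_mem_take hx
    have := FL_pos he x hxe
    simp only [Function.comp, id]
    omega
  have h2 : (e.drop b).map ((· + (b + 1)) ∘ (· - (b + 1))) = e.drop b := by
    rw [List.map_congr_left, List.map_id]
    intro x hx
    obtain ⟨i, hi, hget⟩ := List.mem_iff_getElem.mp hx
    have hlen2 : (e.drop b).length = e.length - b := by simp
    have hxval : x = e.getD (b + i) 0 := by
      rw [← hget, ← getD_drop, getD_lt hi]
    have hbe : b < e.length := by rw [hlen2] at hi; omega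
    have hblow : b + 2 ≤ e.getD b 0 := by
      rcases hP with h' | h'
      · omega
      · exact h'.2
    have hmono : e.getD b 0 ≤ e.getD (b + i) 0 :=
      adj_mono (by rw [hlen]; exact hadj) (by omega) (by rw [hlen2] at hi; omega)
    simp only [Function.comp, id]
    omega
  rw [h1, h2, List.take_append_drop]

lemma seg_glue {m L : ℕ} {hf : List ℕ × List ℕ} (hmem : hf ∈ Pr m L) :
    segNum (hf.1.map (· + 1) ++ hf.2.map (· + (hf.1.length + 1)))
      = segNum hf.1 + segNum hf.2 := by
  obtain ⟨hh, hff, hsum⟩ := mem_Pr.mp hmem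
  obtain ⟨-, hb1, hadj1⟩ := mem_DyckL.mp hh
  obtain ⟨-, hb2, hadj2⟩ := mem_FL.mp hff
  rw [segNum_append, segNum_map_add, segNum_map_add]
  intro h1 h2
  simp only [List.length_map] at h1 h2 ⊢
  rw [getD_map (by omega), getD_map (by omega)]
  have ha := hb1 (hf.1.length - 1) (by omega)
  have hbb := (hb2 0 (by omega)).1
  omega

lemma gm_succ (m L : ℕ) :
    gm (m + 1) L = ∑ jk ∈ Finset.HasAntidiagonal.antidiagonal L, aL jk.1 * gm m jk.2 := by
  have h1 : ∀ jk ∈ Finset.HasAntidiagonal.antidiagonal L, aL jk.1 * gm m jk.2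
      = ∑ hf ∈ DyckL jk.1 ×ˢ FL m jk.2, tP ^ (segNum hf.1 + segNum hf.2) := by
    intro jk _
    rw [aL, gm, Finset.sum_mul_sum, Finset.sum_product]
    exact Finset.sum_congr rfl fun h _ => Finset.sum_congr rfl fun f _ => (pow_add _ _ _).symm
  rw [Finset.sum_congr rfl h1, ← Finset.sum_biUnion Pr_disjoint]
  rw [gm]
  symm
  apply Finset.sum_nbij'
    (i := fun hf => hf.1.map (· + 1) ++ hf.2.map (· + (hf.1.length + 1)))
    (j := fun e => ((e.take (blk e)).map (· - 1), (e.drop (blk e)).map (· - (blk e + 1))))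
  · exact fun hf hmem => glue_mem_FL hmem
  · exact fun e he => split_mem_Pr he
  · exact fun hf hmem => split_glue hmem
  · exact fun e he => glue_split he
  · exact fun hf hmem => by rw [seg_glue hmem]

lemma gm_zero (L : ℕ) : gm 0 L = if L = 0 then 1 else 0 := by
  rcases Nat.eq_zero_or_pos L with rfl | hL
  · rw [if_pos rfl, gm]
    have : FL 0 0 = {[]} := by
      ext e
      rw [mem_FL]
      simp only [Finset.mem_singleton]
      constructor
      · rintro ⟨h1, -, -⟩
        exact List.length_eq_zero_iff.mp h1
      · rintro rfl
        exact ⟨rfl, by omega, by omega⟩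
    rw [this, Finset.sum_singleton]
    have : segNum [] = 0 := rfl
    rw [this, pow_zero]
  · rw [if_neg (by omega), gm]
    have : FL 0 L = ∅ := by
      apply Finset.eq_empty_of_forall_notMem
      intro e he
      rw [mem_FL] at he
      have := he.2.1 0 (by omega)
      omega
    rw [this, Finset.sum_empty]

-- ===== chunk E =====
lemma subP1_t : subP1 tP = tP := by
  simp [subP1]

lemma subP1_p : subP1 pP = 1 := by
  simp [subP1]

lemma DyckL_zero : DyckL 0 = {[]} := by
  ext d
  rw [mem_DyckL]
  simp only [Finset.mem_singleton]
  constructor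
  · rintro ⟨h1, -, -⟩
    exact List.length_eq_zero_iff.mp h1
  · rintro rfl
    exact ⟨rfl, fun i hi => by omega, fun i hi => by omega⟩

lemma DyckL_one : DyckL 1 = {[0]} := by
  ext d
  rw [mem_DyckL]
  simp only [Finset.mem_singleton]
  constructor
  · rintro ⟨h1, h2, -⟩
    obtain ⟨a, rfl⟩ := List.length_eq_one_iff.mp h1
    have := h2 0 (by omega)
    simp only [List.getD_cons_zero] at this
    have ha : a = 0 := by omega
    subst ha
    rfl
  · rintro rfl
    refine ⟨rfl, fun i hi => ?_, fun i hi => by omega⟩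
    have : i = 0 := by omega
    subst this
    simp

lemma aL_zero : aL 0 = 1 := by
  rw [aL, DyckL_zero, Finset.sum_singleton]
  have : segNum [] = 0 := rfl
  rw [this, pow_zero]

lemma coeff_C1 (L : ℕ) :
    PowerSeries.coeff L (PowerSeries.map subP1 Cgf) = aL L := by
  rw [PowerSeries.coeff_map]
  rcases Nat.eq_zero_or_pos L with rfl | hL
  · rw [coeff_Cgf_zero, subP1_p, aL_zero]
  · rw [coeff_Cgf (by omega), map_sum, aL]
    refine Finset.sum_congr rfl fun d _ => ?_
    rw [map_mul, map_pow, map_pow, subP1_t, subP1_p, one_pow, mul_one]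

lemma coeff_C1_pow (m L : ℕ) :
    PowerSeries.coeff L ((PowerSeries.map subP1 Cgf) ^ m) = gm m L := by
  induction m generalizing L with
  | zero =>
      rw [pow_zero, PowerSeries.coeff_one, gm_zero]
  | succ m ih =>
      rw [pow_succ']
      rw [PowerSeries.coeff_mul, gm_succ]
      refine Finset.sum_congr rfl fun jk _ => ?_
      rw [coeff_C1, ih]

noncomputable def sN (n : ℕ) : MvPolynomial (Fin 2) ℚ :=
  ∑ m ∈ Finset.Icc 2 n, tP * pP ^ m * gm m (n - m)

noncomputable def Sser : PowerSeries (MvPolynomial (Fin 2) ℚ) := PowerSeries.mk sN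

lemma coeff_R (n : ℕ) :
    PowerSeries.coeff n (Cgf - PowerSeries.C pP * PowerSeries.X * Cgf
      - PowerSeries.C pP) = sN n := by
  rw [map_sub, map_sub]
  have hre : PowerSeries.C pP * PowerSeries.X * Cgf
      = PowerSeries.C pP * (PowerSeries.X * Cgf) := by ring
  rw [hre, PowerSeries.coeff_C_mul, PowerSeries.coeff_C]
  rcases Nat.eq_zero_or_pos n with rfl | hn1
  · rw [if_pos rfl, PowerSeries.coeff_zero_X_mul, coeff_Cgf_zero, sN]
    rw [show Finset.Icc 2 0 = ∅ from rfl, Finset.sum_empty]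
    ring
  rcases Nat.lt_or_ge n 2 with hn2 | hn2
  · have hn : n = 1 := by omega
    subst hn
    rw [if_neg (by omega), PowerSeries.coeff_succ_X_mul, coeff_Cgf_zero,
      coeff_Cgf (by omega), DyckL_one, Finset.sum_singleton, sN]
    have h1 : segNum [0] = 0 := by decide
    have h2 : lsegNum [0] = 2 := by decide
    rw [h1, h2, show Finset.Icc 2 1 = ∅ from rfl, Finset.sum_empty]
    ring
  · obtain ⟨k, rfl⟩ : ∃ k, n = k + 1 := ⟨n - 1, by omega⟩
    rw [if_neg (by omega), PowerSeries.coeff_succ_X_mul, coeff_split hn2]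
    have e1 : k + 1 - 1 = k := by omega
    rw [e1, ← sN]
    ring

/-- The double sum exchange. -/
lemma sum_exchange (N : ℕ) (G : ℕ → ℕ → ℕ → MvPolynomial (Fin 2) ℚ) :
    ∑ jk ∈ Finset.HasAntidiagonal.antidiagonal N, ∑ m ∈ Finset.Icc 2 jk.2, G jk.1 m (jk.2 - m)
      = ∑ m ∈ Finset.Icc 2 N, ∑ jk ∈ Finset.HasAntidiagonal.antidiagonal (N - m), G jk.1 m jk.2 := by
  rw [Finset.sum_sigma' (Finset.HasAntidiagonal.antidiagonal N) (fun jk => Finset.Icc 2 jk.2)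
    (fun jk m => G jk.1 m (jk.2 - m))]
  rw [Finset.sum_sigma' (Finset.Icc 2 N) (fun m => Finset.HasAntidiagonal.antidiagonal (N - m))
    (fun m jk => G jk.1 m jk.2)]
  apply Finset.sum_nbij' (i := fun x => (⟨x.2, (x.1.1, x.1.2 - x.2)⟩ : (_ : ℕ) × (ℕ × ℕ)))
    (j := fun x => (⟨(x.2.1, x.2.2 + x.1), x.1⟩ : (_ : ℕ × ℕ) × ℕ))
  · rintro ⟨⟨j, k⟩, m⟩ hx
    simp only [Finset.mem_sigma, Finset.HasAntidiagonal.mem_antidiagonal, Finset.mem_Icc] at hx ⊢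
    omega
  · rintro ⟨m, ⟨j, k⟩⟩ hx
    simp only [Finset.mem_sigma, Finset.HasAntidiagonal.mem_antidiagonal, Finset.mem_Icc] at hx ⊢
    omega
  · rintro ⟨⟨j, k⟩, m⟩ hx
    simp only [Finset.mem_sigma, Finset.HasAntidiagonal.mem_antidiagonal, Finset.mem_Icc] at hx
    simp only [Sigma.mk.inj_iff, Prod.mk.injEq, heq_eq_eq]
    exact ⟨⟨trivial, by omega⟩, trivial⟩
  · rintro ⟨m, ⟨j, k⟩⟩ hx
    simp only [Finset.mem_sigma, Finset.HasAntidiagonal.mem_antidiagonal, Finset.mem_Icc] at hx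
    simp only [Sigma.mk.inj_iff, Prod.mk.injEq, heq_eq_eq]
    exact ⟨trivial, trivial, by omega⟩
  · rintro ⟨⟨j, k⟩, m⟩ hx
    rfl

lemma sN_rec (n : ℕ) (hn : 1 ≤ n) :
    pP * ∑ jk ∈ Finset.HasAntidiagonal.antidiagonal (n - 1), aL jk.1 * sN jk.2
      = ∑ m ∈ Finset.Icc 3 n, tP * pP ^ m * gm m (n - m) := by
  have hL : pP * ∑ jk ∈ Finset.HasAntidiagonal.antidiagonal (n - 1), aL jk.1 * sN jk.2
      = ∑ jk ∈ Finset.HasAntidiagonal.antidiagonal (n - 1), ∑ m ∈ Finset.Icc 2 jk.2,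
          (fun j m k => pP * (aL j * (tP * pP ^ m * gm m k))) jk.1 m (jk.2 - m) := by
    rw [Finset.mul_sum]
    refine Finset.sum_congr rfl fun jk _ => ?_
    rw [sN, Finset.mul_sum, Finset.mul_sum]
  rw [hL, sum_exchange (n - 1) (fun j m k => pP * (aL j * (tP * pP ^ m * gm m k)))]
  -- now: Σ_{m ∈ Icc 2 (n-1)} Σ_{jk ∈ antidiag (n-1-m)} pP * (aL jk.1 * (tP pP^m gm m jk.2))
  -- RHS: reindex m' = m + 1
  symm
  apply Finset.sum_nbij' (i := fun m => m - 1) (j := fun m => m + 1)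
  · intro m hm
    simp only [Finset.mem_Icc] at hm ⊢
    omega
  · intro m hm
    simp only [Finset.mem_Icc] at hm ⊢
    omega
  · intro m hm; simp only [Finset.mem_Icc] at hm; omega
  · intro m hm; simp only [Finset.mem_Icc] at hm; omega
  · intro m hm
    simp only [Finset.mem_Icc] at hm
    obtain ⟨m', rfl⟩ : ∃ m', m = m' + 1 := ⟨m - 1, by omega⟩
    simp only [Nat.add_sub_cancel]
    have e1 : n - (m' + 1) = n - 1 - m' := by omega
    rw [e1, gm_succ m' (n - 1 - m'), Finset.mul_sum]
    refine Finset.sum_congr rfl fun jk _ => ?_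
    ring

lemma coeff_Xpow_mul (k n : ℕ) (φ : PowerSeries (MvPolynomial (Fin 2) ℚ)) :
    PowerSeries.coeff n (PowerSeries.X ^ k * φ)
      = if k ≤ n then PowerSeries.coeff (n - k) φ else 0 := by
  rcases Nat.lt_or_ge n k with h | h
  · rw [if_neg (by omega), PowerSeries.coeff_mul]
    apply Finset.sum_eq_zero
    intro jk hjk
    rw [Finset.HasAntidiagonal.mem_antidiagonal] at hjk
    rw [PowerSeries.coeff_X_pow, if_neg (by omega), zero_mul]
  · rw [if_pos h]
    obtain ⟨d, rfl⟩ : ∃ d, n = d + k := ⟨n - k, by omega⟩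
    rw [PowerSeries.coeff_X_pow_mul]
    have e2 : d + k - k = d := by omega
    rw [e2]

lemma main_eq :
    PowerSeries.C tP * (PowerSeries.C pP) ^ 2
        * PowerSeries.X ^ 2 * (PowerSeries.map subP1 Cgf) ^ 2
      + PowerSeries.C pP * PowerSeries.X * Sser * (PowerSeries.map subP1 Cgf)
      = Sser := by
  apply PowerSeries.ext
  intro n
  rw [map_add]
  have hA : PowerSeries.C tP * (PowerSeries.C pP) ^ 2
      * PowerSeries.X ^ 2 * (PowerSeries.map subP1 Cgf) ^ 2
      = PowerSeries.C (tP * pP ^ 2) * (PowerSeries.X ^ 2 * (PowerSeries.map subP1 Cgf) ^ 2) := by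
    rw [map_mul, map_pow]
    ring
  have hB : PowerSeries.C pP * PowerSeries.X * Sser
      * (PowerSeries.map subP1 Cgf)
      = PowerSeries.C pP * (PowerSeries.X * ((PowerSeries.map subP1 Cgf) * Sser)) := by
    ring
  rw [hA, hB, PowerSeries.coeff_C_mul, PowerSeries.coeff_C_mul, coeff_Xpow_mul]
  have hSS : ∀ j : ℕ, PowerSeries.coeff j Sser = sN j := fun j => PowerSeries.coeff_mk j sN
  rw [hSS]
  rcases Nat.eq_zero_or_pos n with rfl | hn
  · rw [if_neg (by omega), PowerSeries.coeff_zero_X_mul, sN,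
      show Finset.Icc 2 0 = ∅ from rfl, Finset.sum_empty]
    ring
  obtain ⟨k, rfl⟩ : ∃ k, n = k + 1 := ⟨n - 1, by omega⟩
  rw [PowerSeries.coeff_succ_X_mul, PowerSeries.coeff_mul]
  have hCS : ∑ jk ∈ Finset.HasAntidiagonal.antidiagonal k,
      PowerSeries.coeff jk.1 (PowerSeries.map subP1 Cgf) * PowerSeries.coeff jk.2 Sser
      = ∑ jk ∈ Finset.HasAntidiagonal.antidiagonal k, aL jk.1 * sN jk.2 := by
    refine Finset.sum_congr rfl fun jk _ => ?_
    rw [coeff_C1, hSS jk.2]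
  rw [hCS]
  have e0 : k + 1 - 1 = k := by omega
  have hrec := sN_rec (k + 1) (by omega)
  rw [e0] at hrec
  rw [hrec]
  rcases Nat.lt_or_ge (k + 1) 2 with h2 | h2
  · rw [if_neg (by omega), sN, show Finset.Icc 2 (k + 1) = ∅ by
      apply Finset.Icc_eq_empty; omega,
      show Finset.Icc 3 (k + 1) = ∅ by apply Finset.Icc_eq_empty; omega,
      Finset.sum_empty]
    ring
  · rw [if_pos (by omega), coeff_C1_pow, sN]
    have hins : Finset.Icc 2 (k + 1) = insert 2 (Finset.Icc 3 (k + 1)) := by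
      ext x
      simp only [Finset.mem_Icc, Finset.mem_insert]
      omega
    rw [hins, Finset.sum_insert (by simp)]


theorem stmt15 :
    letI T : PowerSeries (MvPolynomial (Fin 2) ℚ) := PowerSeries.C (MvPolynomial.X 0)
    letI P : PowerSeries (MvPolynomial (Fin 2) ℚ) := PowerSeries.C (MvPolynomial.X 1)
    letI X : PowerSeries (MvPolynomial (Fin 2) ℚ) := PowerSeries.X
    letI C1 : PowerSeries (MvPolynomial (Fin 2) ℚ) := PowerSeries.map subP1 Cgf
    T * P ^ 2 * X ^ 2 * C1 ^ 2 + P * X * (Cgf - P * X * Cgf - P) * C1 -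
      (Cgf - P * X * Cgf - P) = 0 := by
  have hRS : Cgf - PowerSeries.C pP * PowerSeries.X * Cgf - PowerSeries.C pP = Sser := by
    apply PowerSeries.ext
    intro n
    rw [coeff_R n]
    exact (PowerSeries.coeff_mk n sN).symm
  show PowerSeries.C tP * (PowerSeries.C pP) ^ 2 * PowerSeries.X ^ 2
        * (PowerSeries.map subP1 Cgf) ^ 2
      + PowerSeries.C pP * PowerSeries.X
        * (Cgf - PowerSeries.C pP * PowerSeries.X * Cgf - PowerSeries.C pP)
        * (PowerSeries.map subP1 Cgf)
      - (Cgf - PowerSeries.C pP * PowerSeries.X * Cgf - PowerSeries.C pP) = 0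
  rw [hRS, main_eq, sub_self]


  

end KArr
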